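/- Let G be a finite nonsolvable just non-Dedekind (JND) group. Then G is semisimple: every solvable normal subgroup of G is trivial. -/

import Mathlib

/-- A group is Dedekind if every subgroup of it is normal. -/
def IsDedekind (G : Type*) [Group G] : Prop := ∀ H : Subgroup G, H.Normal

/-- A group is just non-Dedekind (JND) if it is not Dedekind but every quotient
by a nontrivial normal subgroup is Dedekind. -/
def IsJND (G : Type*) [Group G] : Prop :=
  ¬ IsDedekind G ∧
    ∀ (N : Subgroup G) (hN : N.Normal), N ≠ ⊥ →
      letI := hN
      IsDedekind (G ⧸ N)

private lemma dedekind_solvable_aux : ∀ (n : ℕ) (Q : Type _) [Group Q] [Finite Q],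
    Nat.card Q = n → IsDedekind Q → IsSolvable Q := by
  intro n
  induction n using Nat.strong_induction_on with
  | _ n ih =>
    intro Q _ _ hcard hD
    by_cases htriv : ∀ x : Q, x = 1
    · exact isSolvable_of_comm fun a b => by rw [htriv a, htriv b]
    · push_neg at htriv
      obtain ⟨x, hx⟩ := htriv
      set H : Subgroup Q := Subgroup.zpowers x with hH
      haveI hHn : H.Normal := hD H
      have hHne : H ≠ ⊥ := by
        intro h
        exact hx (Subgroup.eq_bot_iff_forall _ |>.mp h x (Subgroup.mem_zpowers x))
      -- quotient is Dedekind
      have hQD : IsDedekind (Q ⧸ H) := by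
        intro K
        have : K = Subgroup.map (QuotientGroup.mk' H) (Subgroup.comap (QuotientGroup.mk' H) K) :=
          (Subgroup.map_comap_eq_self_of_surjective (QuotientGroup.mk'_surjective H) K).symm
        rw [this]
        exact Subgroup.Normal.map (hD _) _ (QuotientGroup.mk'_surjective H)
      -- quotient has smaller cardinality
      have hlt : Nat.card (Q ⧸ H) < n := by
        rw [← hcard]
        have h1 : 0 < Nat.card H := Nat.card_pos
        have h2 : 1 < Nat.card H := by
          rcases Nat.lt_or_ge 1 (Nat.card H) with h | h
          · exact h
          · exfalso
            apply hHne
            have : Nat.card H = 1 := le_antisymm h h1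
            exact Subgroup.eq_bot_of_card_eq H this
        have heq := Subgroup.card_eq_card_quotient_mul_card_subgroup H
        have hqpos : 0 < Nat.card (Q ⧸ H) := Nat.card_pos
        calc Nat.card (Q ⧸ H) = Nat.card (Q ⧸ H) * 1 := (mul_one _).symm
          _ < Nat.card (Q ⧸ H) * Nat.card H := by
              exact (Nat.mul_lt_mul_left hqpos).mpr h2
          _ = Nat.card Q := heq.symm
      haveI : IsSolvable (Q ⧸ H) := ih _ hlt _ rfl hQD
      haveI : IsSolvable H := isSolvable_of_comm fun ⟨a, ha⟩ ⟨b, hb⟩ => by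
        obtain ⟨m, rfl⟩ := ha
        obtain ⟨k, rfl⟩ := hb
        ext
        simpa using (zpow_mul_comm x m k)
      exact solvable_of_ker_le_range H.subtype (QuotientGroup.mk' H) (hG' := by assumption) (hG'' := by assumption)
        (by rw [QuotientGroup.ker_mk', Subgroup.range_subtype])

/-- A finite nonsolvable JND group is semisimple: every solvable normal subgroup
is trivial. -/
theorem finite_nonsolvable_jnd_semisimple {G : Type*} [Group G] [Finite G]
    (hns : ¬ IsSolvable G) (hG : IsJND G) :
    ∀ N : Subgroup G, N.Normal → IsSolvable N → N = ⊥ := by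
  intro N hNn hNs
  by_contra hne
  have hQD : IsDedekind (G ⧸ N) := hG.2 N hNn hne
  haveI := hNn
  haveI : IsSolvable (G ⧸ N) := dedekind_solvable_aux _ (G ⧸ N) rfl hQD
  haveI := hNs
  exact hns (solvable_of_ker_le_range N.subtype (QuotientGroup.mk' N) (hG' := by assumption) (hG'' := by assumption)
    (by rw [QuotientGroup.ker_mk', Subgroup.range_subtype]))
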